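/- arXiv:2008.08833 — 3 statements merged into one kernel-verified Lean document; each statement's English description precedes it below -/
import Mathlib

section
/- Let 𝒜 be a unital associative ℂ-algebra, let n ≥ 1, let x₁,…,x_n ∈ 𝒜, let a : [n]×[n] → ℂ have rank ϱ ≥ 1 as a matrix, let b : [n] → ℂ and γ ∈ ℂ, and set p(x) = Σ_{ℓ,m=1}^n a(ℓ,m)·x_ℓx_m + Σ_{ℓ=1}^n b(ℓ)·x_ℓ + γ·1. Then there exist vectors r₁,…,r_ϱ ∈ ℂⁿ that are orthonormal and vectors s₀,s₁,…,s_ϱ ∈ ℂⁿ with s₁,…,s_ϱ nonzero and pairwise orthogonal such that, writing ⟨u,x⟩ = Σ_{ℓ=1}^n conj(u(ℓ))·x_ℓ ∈ 𝒜 for u ∈ ℂⁿ, for every z ∈ ℂ the (ϱ+1)×(ϱ+1) matrix L^z(x) over 𝒜 — with (0,0)-entry ⟨s₀,x⟩ + (γ−z)·1, (0,k)-entry ⟨r_k,x⟩ and (k,0)-entry ⟨s_k,x⟩ for k ∈ {1,…,ϱ}, (k,k)-entry −1 for k ∈ {1,…,ϱ}, and all other entries 0 — is invertible in Mat_{ϱ+1}(𝒜)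 if and only if p(x) − z·1 is invertible in 𝒜, and in that case the (0,0)-entry of (L^z(x))⁻¹ equals (p(x) − z·1)⁻¹. -/
noncomputable section

/-- `⟨u, x⟩ = Σ_ℓ conj(u ℓ) • x_ℓ` : the linear form on the algebra associated to `u ∈ ℂⁿ`. -/
def bracket {𝒜 : Type*} [Ring 𝒜] [Algebra ℂ 𝒜] {n : ℕ} (u : Fin n → ℂ) (x : Fin n → 𝒜) : 𝒜 :=
  ∑ ℓ, (starRingEnd ℂ) (u ℓ) • x ℓ

/-- Evaluation of the quadratic polynomial `p(x) = Σ a(ℓ,m) x_ℓ x_m + Σ b(ℓ) x_ℓ + γ·1`. -/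
def quadEvalAlg {𝒜 : Type*} [Ring 𝒜] [Algebra ℂ 𝒜] {n : ℕ}
    (a : Fin n → Fin n → ℂ) (b : Fin n → ℂ) (γ : ℂ) (x : Fin n → 𝒜) : 𝒜 :=
  (∑ ℓ, ∑ m, a ℓ m • (x ℓ * x m)) + (∑ ℓ, b ℓ • x ℓ) + algebraMap ℂ 𝒜 γ

/-- The `(ϱ+1) × (ϱ+1)` linearization matrix `L^z(x)` over the algebra `𝒜` built from the
vectors `r₁,…,r_ϱ` and `s₀,s₁,…,s_ϱ`:  its `(0,0)`-entry is `⟨s₀,x⟩ + (γ−z)·1`, its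
`(0,k)`-entry is `⟨r_k,x⟩`, its `(k,0)`-entry is `⟨s_k,x⟩`, its `(k,k)`-entry is `−1`
(`k ∈ {1,…,ϱ}`), and all other entries vanish. -/
def linMatAlg {𝒜 : Type*} [Ring 𝒜] [Algebra ℂ 𝒜] {n ϱ : ℕ}
    (r : Fin ϱ → Fin n → ℂ) (s : Fin (ϱ + 1) → Fin n → ℂ) (γ z : ℂ)
    (x : Fin n → 𝒜) : Matrix (Fin (ϱ + 1)) (Fin (ϱ + 1)) 𝒜 :=
  Matrix.of fun k l =>
    if hl : l = 0 then
      (if k = 0 then bracket (s 0) x + algebraMap ℂ 𝒜 (γ - z) else bracket (s k) x)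
    else if k = 0 then bracket (r (l.pred hl)) x
    else if k = l then -1 else 0

namespace LinTrick

variable {𝒜 : Type*} [Ring 𝒜] {ϱ : ℕ}

def E1 (R : Fin ϱ → 𝒜) : Matrix (Fin (ϱ + 1)) (Fin (ϱ + 1)) 𝒜 :=
  Matrix.of fun k l => if k = 0 then (Fin.cases 1 R l) else if k = l then 1 else 0

def E2 (S : Fin ϱ → 𝒜) : Matrix (Fin (ϱ + 1)) (Fin (ϱ + 1)) 𝒜 :=
  Matrix.of fun k l => if l = 0 then (Fin.cases 1 S k) else if k = l then 1 else 0

def L0 (c : 𝒜) (R S : Fin ϱ → 𝒜) : Matrix (Fin (ϱ + 1)) (Fin (ϱ + 1)) 𝒜 :=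
  Matrix.of fun k l =>
    Fin.cases (Fin.cases c S k) (fun l' => Fin.cases (R l') (fun k' => if k' = l' then -1 else 0) k) l

lemma E1_mul_E1 (R R' : Fin ϱ → 𝒜) : E1 R * E1 R' = E1 (R + R') := by
  ext k l
  rw [Matrix.mul_apply]
  induction k using Fin.cases with
  | zero =>
      rw [Fin.sum_univ_succ]
      induction l using Fin.cases with
      | zero => simp [E1, Fin.succ_ne_zero]
      | succ l' => simp [E1, Fin.succ_ne_zero, Fin.succ_inj, mul_ite, ite_mul,
          Finset.sum_ite_eq, Finset.sum_ite_eq', add_comm]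
  | succ k' =>
      have hrow : ∀ x, x ≠ k'.succ → ∀ l, E1 R k'.succ x * E1 R' x l = 0 := by
        intro x hx l
        simp [E1, Fin.succ_ne_zero, Ne.symm hx]
      induction l using Fin.cases with
      | zero =>
          exact (Fintype.sum_eq_single k'.succ (fun x hx => hrow x hx 0)).trans
            (by simp [E1, Fin.succ_ne_zero])
      | succ l' =>
          exact (Fintype.sum_eq_single k'.succ (fun x hx => hrow x hx l'.succ)).trans
            (by simp [E1, Fin.succ_ne_zero, Fin.succ_inj])

lemma E1_zero : (E1 0 : Matrix (Fin (ϱ + 1)) (Fin (ϱ + 1)) 𝒜) = 1 := by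
  ext k l
  induction k using Fin.cases with
  | zero =>
      induction l using Fin.cases with
      | zero => simp [E1, Matrix.one_apply]
      | succ l' => simp [E1, Matrix.one_apply, (Fin.succ_ne_zero l').symm]
  | succ k' =>
      simp [E1, Matrix.one_apply, Fin.succ_ne_zero]

lemma E2_mul_E2 (S S' : Fin ϱ → 𝒜) : E2 S * E2 S' = E2 (S + S') := by
  ext k l
  rw [Matrix.mul_apply]
  induction l using Fin.cases with
  | zero =>
      rw [Fin.sum_univ_succ]
      induction k using Fin.cases with
      | zero =>
          rw [← Fin.sum_univ_succ (fun x => E2 S 0 x * E2 S' x 0)]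
          exact (Fintype.sum_eq_single 0 (fun x hx => by simp [E2, hx, Ne.symm hx])).trans
            (by simp [E2])
      | succ k' => simp [E2, Fin.succ_ne_zero, Fin.succ_inj, mul_ite, ite_mul,
          Finset.sum_ite_eq, Finset.sum_ite_eq']
  | succ l' =>
      induction k using Fin.cases with
      | zero => simp [E2, Fin.succ_ne_zero, (Fin.succ_ne_zero l').symm, mul_ite, ite_mul,
          Finset.sum_ite_eq, Finset.sum_ite_eq']
      | succ k' => simp [E2, Fin.succ_ne_zero, Fin.succ_inj, (Fin.succ_ne_zero l').symm,
          mul_ite, ite_mul, Finset.sum_ite_eq, Finset.sum_ite_eq']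

lemma E2_zero : (E2 0 : Matrix (Fin (ϱ + 1)) (Fin (ϱ + 1)) 𝒜) = 1 := by
  ext k l
  induction l using Fin.cases with
  | zero =>
      induction k using Fin.cases with
      | zero => simp [E2, Matrix.one_apply]
      | succ k' => simp [E2, Matrix.one_apply, Fin.succ_ne_zero]
  | succ l' =>
      simp [E2, Matrix.one_apply, (Fin.succ_ne_zero l').symm, Fin.succ_ne_zero]

lemma isUnit_E1 (R : Fin ϱ → 𝒜) : IsUnit (E1 R) :=
  ⟨⟨E1 R, E1 (-R), by rw [E1_mul_E1]; simp [E1_zero], by rw [E1_mul_E1]; simp [E1_zero]⟩, rfl⟩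

lemma isUnit_E2 (S : Fin ϱ → 𝒜) : IsUnit (E2 S) :=
  ⟨⟨E2 S, E2 (-S), by rw [E2_mul_E2]; simp [E2_zero], by rw [E2_mul_E2]; simp [E2_zero]⟩, rfl⟩

lemma fact (c : 𝒜) (R S : Fin ϱ → 𝒜) :
    E1 R * L0 c R S * E2 S
      = Matrix.diagonal (Fin.cases (c + ∑ j, R j * S j) (fun _ => -1)) := by
  have h1 : E1 R * L0 c R S = Matrix.of (fun k l =>
      Fin.cases (Fin.cases (c + ∑ j, R j * S j) S k)
        (fun l' => Fin.cases 0 (fun k' => if k' = l' then -1 else 0) k) l) := by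
    ext k l
    rw [Matrix.mul_apply]
    induction k using Fin.cases with
    | zero =>
        rw [Fin.sum_univ_succ]
        induction l using Fin.cases with
        | zero => simp [E1, L0, Fin.succ_ne_zero]
        | succ l' =>
            simp [E1, L0, Fin.succ_ne_zero, mul_ite, ite_mul,
              Finset.sum_ite_eq, Finset.sum_ite_eq']
    | succ k' =>
        induction l using Fin.cases with
        | zero => simp [E1, L0, Fin.succ_ne_zero, (Fin.succ_ne_zero k').symm, Fin.succ_inj,
            mul_ite, ite_mul, Finset.sum_ite_eq, Finset.sum_ite_eq']
        | succ l' => simp [E1, L0, Fin.succ_ne_zero, (Fin.succ_ne_zero k').symm, Fin.succ_inj,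
            mul_ite, ite_mul, Finset.sum_ite_eq, Finset.sum_ite_eq']
  rw [h1]
  ext k l
  rw [Matrix.mul_apply]
  induction l using Fin.cases with
  | zero =>
      rw [Fin.sum_univ_succ]
      induction k using Fin.cases with
      | zero => simp [E2, Fin.succ_ne_zero, Matrix.diagonal]
      | succ k' => simp [E2, Fin.succ_ne_zero, Fin.succ_inj, (Fin.succ_ne_zero k').symm,
          Matrix.diagonal, mul_ite, ite_mul, Finset.sum_ite_eq, Finset.sum_ite_eq']
  | succ l' =>
      induction k using Fin.cases with
      | zero => simp [E2, Fin.succ_ne_zero, (Fin.succ_ne_zero l').symm, Matrix.diagonal,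
          mul_ite, ite_mul, Finset.sum_ite_eq, Finset.sum_ite_eq']
      | succ k' => simp [E2, Fin.succ_ne_zero, Fin.succ_inj, (Fin.succ_ne_zero l').symm,
          Matrix.diagonal, mul_ite, ite_mul, Finset.sum_ite_eq, Finset.sum_ite_eq',
          Matrix.diagonal_apply]

end LinTrick

namespace LinTrick2
open LinTrick

variable {𝒜 : Type*} [Ring 𝒜] {ϱ : ℕ}

lemma diag_prod_one {d q : 𝒜} (h1 : d * q = 1) :
    Matrix.diagonal (Fin.cases d (fun _ => -1) : Fin (ϱ + 1) → 𝒜) *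
      Matrix.diagonal (Fin.cases q (fun _ => -1)) = 1 := by
  rw [Matrix.diagonal_mul_diagonal]
  have : (fun i => (Fin.cases d (fun _ => -1) : Fin (ϱ + 1) → 𝒜) i *
      Fin.cases q (fun _ => -1) i) = fun _ => 1 := by
    funext i
    induction i using Fin.cases with
    | zero => simpa using h1
    | succ i' => simp
  rw [this, Matrix.diagonal_one]

lemma cancel_left {M : Type*} [Monoid M] {A B : M} (h : A * B = 1) (X : M) :
    A * (B * X) = X := by rw [← mul_assoc, h, one_mul]

lemma key (c : 𝒜) (R S : Fin ϱ → 𝒜) (d : 𝒜) (hd : d = c + ∑ j, R j * S j) :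
    (IsUnit (L0 c R S) ↔ IsUnit d) ∧
      (IsUnit d → Ring.inverse (L0 c R S) 0 0 = Ring.inverse d) := by
  have hfact : E1 R * L0 c R S * E2 S
      = Matrix.diagonal (Fin.cases d (fun _ => -1)) := by rw [hd]; exact fact c R S
  have h1a : E1 (-R) * E1 R = (1 : Matrix (Fin (ϱ + 1)) (Fin (ϱ + 1)) 𝒜) := by
    rw [E1_mul_E1]; simpa using E1_zero
  have h1b : E1 R * E1 (-R) = (1 : Matrix (Fin (ϱ + 1)) (Fin (ϱ + 1)) 𝒜) := by
    rw [E1_mul_E1]; simpa using E1_zero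
  have h2a : E2 S * E2 (-S) = (1 : Matrix (Fin (ϱ + 1)) (Fin (ϱ + 1)) 𝒜) := by
    rw [E2_mul_E2]; simpa using E2_zero
  have h2b : E2 (-S) * E2 S = (1 : Matrix (Fin (ϱ + 1)) (Fin (ϱ + 1)) 𝒜) := by
    rw [E2_mul_E2]; simpa using E2_zero
  have hL : L0 c R S
      = E1 (-R) * (Matrix.diagonal (Fin.cases d (fun _ => -1)) * E2 (-S)) := by
    rw [← hfact]
    simp only [mul_assoc]
    rw [h2a, mul_one, cancel_left h1a]
  -- backward : IsUnit (L0) → IsUnit d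
  have hbwd : IsUnit (L0 c R S) → IsUnit d := by
    intro hu
    obtain ⟨w, hw⟩ := hu
    set Wi : Matrix (Fin (ϱ + 1)) (Fin (ϱ + 1)) 𝒜 := Units.val w⁻¹ with hWi
    have hw1 : L0 c R S * Wi = 1 := by rw [hWi, ← hw]; exact w.mul_inv
    have hw2 : Wi * L0 c R S = 1 := by rw [hWi, ← hw]; exact w.inv_mul
    have hDDi : Matrix.diagonal (Fin.cases d (fun _ => -1))
        * (E2 (-S) * (Wi * E1 (-R))) = 1 := by
      rw [← hfact]
      simp only [mul_assoc]
      rw [cancel_left h2a, cancel_left hw1]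
      exact h1b
    have hDiD : (E2 (-S) * (Wi * E1 (-R)))
        * Matrix.diagonal (Fin.cases d (fun _ => -1)) = 1 := by
      rw [← hfact]
      simp only [mul_assoc]
      rw [cancel_left h1a, cancel_left hw2]
      exact h2b
    set W : Matrix (Fin (ϱ + 1)) (Fin (ϱ + 1)) 𝒜 :=
      E2 (-S) * (Wi * E1 (-R)) with hW
    have e1 : d * W 0 0 = 1 := by
      have := congrFun (congrFun hDDi 0) 0
      rw [Matrix.mul_apply] at this
      rw [Fintype.sum_eq_single (0 : Fin (ϱ + 1))
        (fun j hj => by simp [Matrix.diagonal_apply_ne _ (Ne.symm hj)])] at this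
      simpa using this
    have e2 : W 0 0 * d = 1 := by
      have := congrFun (congrFun hDiD 0) 0
      rw [Matrix.mul_apply] at this
      rw [Fintype.sum_eq_single (0 : Fin (ϱ + 1))
        (fun j hj => by simp [Matrix.diagonal_apply_ne _ hj, mul_eq_zero])] at this
      simpa using this
    exact ⟨⟨d, W 0 0, e1, e2⟩, rfl⟩
  -- forward : IsUnit d → IsUnit L0 together with the inverse entry
  have hfwd : ∀ hu : IsUnit d, IsUnit (L0 c R S) ∧
      Ring.inverse (L0 c R S) 0 0 = Ring.inverse d := by
    intro hu
    have hq1 : d * Ring.inverse d = 1 := Ring.mul_inverse_cancel d hu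
    have hq2 : Ring.inverse d * d = 1 := Ring.inverse_mul_cancel d hu
    have hDq1 : Matrix.diagonal (Fin.cases d (fun _ => -1))
        * Matrix.diagonal (Fin.cases (Ring.inverse d) (fun _ => -1))
        = (1 : Matrix (Fin (ϱ + 1)) (Fin (ϱ + 1)) 𝒜) := diag_prod_one hq1
    have hDq2 : Matrix.diagonal (Fin.cases (Ring.inverse d) (fun _ => -1))
        * Matrix.diagonal (Fin.cases d (fun _ => -1))
        = (1 : Matrix (Fin (ϱ + 1)) (Fin (ϱ + 1)) 𝒜) := diag_prod_one hq2
    set Linv : Matrix (Fin (ϱ + 1)) (Fin (ϱ + 1)) 𝒜 :=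
      E2 S * (Matrix.diagonal (Fin.cases (Ring.inverse d) (fun _ => -1)) * E1 R) with hLinv
    have hLi1 : L0 c R S * Linv = 1 := by
      rw [hL, hLinv]
      simp only [mul_assoc]
      rw [cancel_left h2b, cancel_left hDq1]
      exact h1a
    have hLi2 : Linv * L0 c R S = 1 := by
      rw [hL, hLinv]
      simp only [mul_assoc]
      rw [cancel_left h1b, cancel_left hDq2]
      exact h2a
    refine ⟨⟨⟨L0 c R S, Linv, hLi1, hLi2⟩, rfl⟩, ?_⟩
    have hinv : Ring.inverse (L0 c R S) = Linv :=
      Ring.inverse_unit ⟨L0 c R S, Linv, hLi1, hLi2⟩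
    rw [hinv, hLinv]
    rw [Matrix.mul_apply]
    rw [Fintype.sum_eq_single (0 : Fin (ϱ + 1))
      (fun j hj => by simp [E2, hj, Ne.symm hj])]
    rw [Matrix.mul_apply]
    rw [Fintype.sum_eq_single (0 : Fin (ϱ + 1))
      (fun j hj => by simp [E1, hj, Matrix.diagonal_apply_ne _ (Ne.symm hj)])]
    simp [E1, E2]
  exact ⟨⟨hbwd, fun h => (hfwd h).1⟩, fun h => (hfwd h).2⟩

end LinTrick2

namespace LinTrickLA

open Complex Finset Matrix

local notation "conj'" => starRingEnd ℂ

lemma exists_decomp {n ϱ : ℕ} (a : Fin n → Fin n → ℂ) (ha : (Matrix.of a).rank = ϱ) :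
    ∃ (r : Fin ϱ → Fin n → ℂ) (t : Fin ϱ → Fin n → ℂ),
      (∀ k l, ∑ i, conj' (r k i) * r l i = if k = l then 1 else 0) ∧
      (∀ k, t k ≠ 0) ∧
      (∀ k l, k ≠ l → ∑ i, conj' (t k i) * t l i = 0) ∧
      (∀ ℓ m, a ℓ m = ∑ k, conj' (r k ℓ) * conj' (t k m)) := by
  classical
  set A : Matrix (Fin n) (Fin n) ℂ := Matrix.of a with hA
  have hH : (A * Aᴴ).IsHermitian := Matrix.isHermitian_mul_conjTranspose_self A
  set μ : Fin n → ℝ := hH.eigenvalues with hμdef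
  set v := hH.eigenvectorBasis with hvdef
  have hcard : Fintype.card {i // μ i ≠ 0} = ϱ := by
    open scoped ComplexOrder in
    rw [← hH.rank_eq_card_non_zero_eigs, Matrix.rank_self_mul_conjTranspose, ha]
  set e : Fin ϱ ≃ {i // μ i ≠ 0} := (Fintype.equivFinOfCardEq hcard).symm with hedef
  set u : Fin ϱ → Fin n → ℂ := fun k => (v (e k).1 : EuclideanSpace ℂ (Fin n)) with hudef
  -- orthonormality of the eigenvector basis, in coordinates
  have horth : ∀ i j : Fin n, ∑ x, conj' ((v i : EuclideanSpace ℂ (Fin n)) x) *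
      (v j : EuclideanSpace ℂ (Fin n)) x = if i = j then 1 else 0 := by
    intro i j
    have := (orthonormal_iff_ite.mp v.orthonormal) i j
    simpa [PiLp.inner_apply, RCLike.inner_apply, mul_comm] using this
  -- eigenvector equation in coordinates
  have heig : ∀ i : Fin n, ∀ jj : Fin n,
      ∑ m, (A * Aᴴ) jj m * (v i : EuclideanSpace ℂ (Fin n)) m
        = (μ i : ℂ) * (v i : EuclideanSpace ℂ (Fin n)) jj := by
    intro i jj
    have := congrFun (hH.mulVec_eigenvectorBasis i) jj
    simpa [Matrix.mulVec, dotProduct, ← hμdef, ← hvdef] using this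
  -- the core sum identity
  have hcore : ∀ p q : Fin n → ℂ,
      ∑ m, (∑ j, conj' (p j) * a j m) * conj' (∑ j, conj' (q j) * a j m)
        = ∑ j, conj' (p j) * (∑ m, (A * Aᴴ) j m * q m) := by
    intro p q
    have expand : ∀ m, (∑ j, conj' (p j) * a j m) * conj' (∑ j, conj' (q j) * a j m)
        = ∑ j, ∑ j', (conj' (p j) * q j') * (a j m * conj' (a j' m)) := by
      intro m
      rw [_root_.map_sum, Finset.sum_mul]
      refine Finset.sum_congr rfl fun j _ => ?_
      rw [Finset.mul_sum]
      refine Finset.sum_congr rfl fun j' _ => ?_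
      rw [_root_.map_mul, Complex.conj_conj]
      ring
    rw [Finset.sum_congr rfl fun m _ => expand m]
    rw [Finset.sum_comm]
    refine Finset.sum_congr rfl fun j _ => ?_
    rw [Finset.sum_comm, Finset.mul_sum]
    refine Finset.sum_congr rfl fun j' _ => ?_
    rw [Matrix.mul_apply]
    simp only [Matrix.conjTranspose_apply, hA, Matrix.of_apply, Complex.star_def]
    rw [Finset.sum_mul, Finset.mul_sum]
    refine Finset.sum_congr rfl fun m _ => ?_
    ring
  -- rows of `vᴴ A` with zero eigenvalue vanish
  have hgzero : ∀ i : Fin n, μ i = 0 →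
      ∀ m, (∑ j, conj' ((v i : EuclideanSpace ℂ (Fin n)) j) * a j m) = 0 := by
    intro i hμi m
    set g : Fin n → ℂ := fun m => ∑ j, conj' ((v i : EuclideanSpace ℂ (Fin n)) j) * a j m
      with hgdef
    have h0 : ∑ m', g m' * conj' (g m') = 0 := by
      rw [hgdef]
      rw [hcore (fun j => (v i : EuclideanSpace ℂ (Fin n)) j)
        (fun j => (v i : EuclideanSpace ℂ (Fin n)) j)]
      have : ∀ j : Fin n, ∑ m', (A * Aᴴ) j m' * (v i : EuclideanSpace ℂ (Fin n)) m'
          = (μ i : ℂ) * (v i : EuclideanSpace ℂ (Fin n)) j := fun j => heig i j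
      simp [this, hμi]
    have h1 : ∑ m', Complex.normSq (g m') = 0 := by
      have : ((∑ m', Complex.normSq (g m') : ℝ) : ℂ) = 0 := by
        push_cast
        rw [← h0]
        exact Finset.sum_congr rfl fun m' _ => (Complex.mul_conj (g m')).symm
      exact_mod_cast this
    have h2 : ∀ m', Complex.normSq (g m') = 0 := by
      intro m'
      have := (Finset.sum_eq_zero_iff_of_nonneg
        (fun x _ => Complex.normSq_nonneg (g x))).mp h1
      exact this m' (Finset.mem_univ m')
    exact Complex.normSq_eq_zero.mp (h2 m)
  -- the Gram identity for the `t`-vectors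
  have hQ : ∀ k l : Fin ϱ,
      ∑ m, (∑ j, conj' (u k j) * a j m) * conj' (∑ j, conj' (u l j) * a j m)
        = ((μ (e l).1 : ℂ)) * (if k = l then 1 else 0) := by
    intro k l
    rw [hcore (u k) (u l)]
    have : ∀ j : Fin n, ∑ m, (A * Aᴴ) j m * u l m = (μ (e l).1 : ℂ) * u l j := fun j =>
      heig (e l).1 j
    simp only [this]
    have : ∑ j, conj' (u k j) * ((μ (e l).1 : ℂ) * u l j)
        = (μ (e l).1 : ℂ) * ∑ j, conj' (u k j) * u l j := by
      rw [Finset.mul_sum]; exact Finset.sum_congr rfl fun j _ => by ring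
    rw [this, hudef]
    have := horth (e k).1 (e l).1
    rw [this]
    congr 1
    by_cases hkl : k = l
    · simp [hkl]
    · have : (e k).1 ≠ (e l).1 := fun h => hkl (e.injective (Subtype.ext h))
      simp [hkl, this]
  refine ⟨fun k i => conj' (u k i), fun k m => conj' (∑ j, conj' (u k j) * a j m), ?_, ?_, ?_, ?_⟩
  · -- orthonormality of r
    intro k l
    have := horth (e k).1 (e l).1
    have hc : ∑ i, conj' (conj' (u k i)) * conj' (u l i)
        = conj' (∑ i, conj' (u k i) * u l i) := by
      rw [_root_.map_sum]
      exact Finset.sum_congr rfl fun i _ => by rw [_root_.map_mul]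
    rw [hc, hudef]
    rw [this]
    by_cases hkl : k = l
    · simp [hkl]
    · have hne : (e k).1 ≠ (e l).1 := fun h => hkl (e.injective (Subtype.ext h))
      simp [hkl, hne]
  · -- t k ≠ 0
    intro k ht
    have hzero : ∀ m, (∑ j, conj' (u k j) * a j m) = 0 := by
      intro m
      have h1 : conj' (∑ j, conj' (u k j) * a j m) = 0 := congrFun ht m
      simpa using congrArg conj' h1
    have h := hQ k k
    simp only [hzero, zero_mul, map_zero, Finset.sum_const_zero, if_pos rfl, mul_one] at h
    have hc : (μ (e k).1 : ℂ) = 0 := by simpa using h.symm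
    exact (e k).2 (by exact_mod_cast hc)
  · -- orthogonality of t
    intro k l hkl
    have h := hQ k l
    have hrw : ∑ i, conj' (conj' (∑ j, conj' (u k j) * a j i)) * conj' (∑ j, conj' (u l j) * a j i)
        = ∑ m, (∑ j, conj' (u k j) * a j m) * conj' (∑ j, conj' (u l j) * a j m) := by
      exact Finset.sum_congr rfl fun i _ => by rw [Complex.conj_conj]
    rw [hrw, h]
    simp [hkl]
  · -- the decomposition of a
    intro ℓ m
    set c : EuclideanSpace ℂ (Fin n) := WithLp.toLp 2 (fun j => a j m) with hcdef
    have hrepr := v.sum_repr c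
    have happ : a ℓ m = ∑ i, (v.repr c i) * (v i : EuclideanSpace ℂ (Fin n)) ℓ := by
      have h1 := congrArg (fun w : EuclideanSpace ℂ (Fin n) => EuclideanSpace.proj ℓ w) hrepr
      simp only [_root_.map_sum, _root_.map_smul] at h1
      have h2 : ∀ w : EuclideanSpace ℂ (Fin n), EuclideanSpace.proj ℓ w = w ℓ := fun _ => rfl
      rw [show a ℓ m = c ℓ from rfl, ← h2 c, ← h1]
      refine Finset.sum_congr rfl fun i _ => ?_
      rw [h2]
      simp [smul_eq_mul]
    have hreprval : ∀ i, v.repr c i = ∑ j, conj' ((v i : EuclideanSpace ℂ (Fin n)) j) * a j m := by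
      intro i
      rw [v.repr_apply_apply]
      simp [PiLp.inner_apply, RCLike.inner_apply, hcdef, mul_comm]
    rw [happ]
    have hzero : ∀ i, μ i = 0 → (v.repr c i) * (v i : EuclideanSpace ℂ (Fin n)) ℓ = 0 := by
      intro i hi
      rw [hreprval i, hgzero i hi]
      ring
    have hfilter : ∑ i, (v.repr c i) * (v i : EuclideanSpace ℂ (Fin n)) ℓ
        = ∑ i ∈ Finset.univ.filter (fun i => μ i ≠ 0),
            (v.repr c i) * (v i : EuclideanSpace ℂ (Fin n)) ℓ := by
      symm
      apply Finset.sum_filter_of_ne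
      intro i _ hne hi
      exact hne (hzero i hi)
    rw [hfilter]
    rw [Finset.sum_subtype (p := fun i => μ i ≠ 0) (Finset.univ.filter (fun i => μ i ≠ 0))
      (fun i => by simp) (fun i => (v.repr c i) * (v i : EuclideanSpace ℂ (Fin n)) ℓ)]
    rw [← e.sum_comp (fun i : {i // μ i ≠ 0} =>
      (v.repr c i.1) * (v i.1 : EuclideanSpace ℂ (Fin n)) ℓ)]
    apply Finset.sum_congr rfl
    intro k _
    rw [hreprval]
    rw [Complex.conj_conj, Complex.conj_conj]
    rw [hudef]
    ring

end LinTrickLA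

/-- **Linearization** (Lemma 4.1): for a degree-two polynomial with quadratic part of rank
`ϱ ≥ 1`, there are orthonormal `r₁,…,r_ϱ` and orthogonal nonzero `s₁,…,s_ϱ` (plus `s₀`) such
that for every `z`, the linearization `L^z(x)` is invertible iff `p(x) − z·1` is, and then the
`(0,0)`-entry of its inverse equals `(p(x) − z·1)⁻¹`. -/



theorem linearization_trick {𝒜 : Type*} [Ring 𝒜] [Algebra ℂ 𝒜] (n ϱ : ℕ) (hϱ : 1 ≤ ϱ)
    (x : Fin n → 𝒜) (a : Fin n → Fin n → ℂ) (ha : (Matrix.of a).rank = ϱ)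
    (b : Fin n → ℂ) (γ : ℂ) :
    ∃ (r : Fin ϱ → Fin n → ℂ) (s : Fin (ϱ + 1) → Fin n → ℂ),
      (∀ k l : Fin ϱ, ∑ i, (starRingEnd ℂ) (r k i) * r l i = if k = l then 1 else 0) ∧
      (∀ k : Fin (ϱ + 1), k ≠ 0 → s k ≠ 0) ∧
      (∀ k l : Fin (ϱ + 1), k ≠ 0 → l ≠ 0 → k ≠ l →
        ∑ i, (starRingEnd ℂ) (s k i) * s l i = 0) ∧
      ∀ z : ℂ,
        (IsUnit (linMatAlg r s γ z x) ↔ IsUnit (quadEvalAlg a b γ x - algebraMap ℂ 𝒜 z)) ∧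
        (IsUnit (linMatAlg r s γ z x) →
          Ring.inverse (linMatAlg r s γ z x) 0 0
            = Ring.inverse (quadEvalAlg a b γ x - algebraMap ℂ 𝒜 z)) := by
  classical
  obtain ⟨r, t, hort, htne, htorth, hdec⟩ := LinTrickLA.exists_decomp a ha
  set s : Fin (ϱ + 1) → Fin n → ℂ :=
    Fin.cases (fun ℓ => (starRingEnd ℂ) (b ℓ)) t with hs
  have hs0 : s 0 = fun ℓ => (starRingEnd ℂ) (b ℓ) := by rw [hs]; simp
  have hssucc : ∀ k : Fin ϱ, s k.succ = t k := fun k => by rw [hs]; simp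
  refine ⟨r, s, hort, ?_, ?_, ?_⟩
  · intro k hk
    induction k using Fin.cases with
    | zero => exact absurd rfl hk
    | succ k' => rw [hssucc]; exact htne k'
  · intro k l hk hl hkl
    induction k using Fin.cases with
    | zero => exact absurd rfl hk
    | succ k' =>
        induction l using Fin.cases with
        | zero => exact absurd rfl hl
        | succ l' =>
            rw [hssucc, hssucc]
            exact htorth k' l' (fun h => hkl (congrArg Fin.succ h))
  · intro z
    set c : 𝒜 := bracket (s 0) x + algebraMap ℂ 𝒜 (γ - z) with hc
    set R : Fin ϱ → 𝒜 := fun k => bracket (r k) x with hR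
    set S : Fin ϱ → 𝒜 := fun k => bracket (t k) x with hS
    have hLeq : linMatAlg r s γ z x = LinTrick.L0 c R S := by
      ext k l
      induction l using Fin.cases with
      | zero =>
          induction k using Fin.cases with
          | zero => simp [linMatAlg, LinTrick.L0, hc]
          | succ k' => simp [linMatAlg, LinTrick.L0, Fin.succ_ne_zero, hssucc, hS]
      | succ l' =>
          induction k using Fin.cases with
          | zero => simp [linMatAlg, LinTrick.L0, Fin.succ_ne_zero, hR]
          | succ k' => simp [linMatAlg, LinTrick.L0, Fin.succ_ne_zero, Fin.succ_inj]
    have hbr0 : bracket (s 0) x = ∑ ℓ, b ℓ • x ℓ := by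
      simp only [bracket]
      refine Finset.sum_congr rfl fun ℓ _ => ?_
      simp [hs0]
    have hquad : ∑ j, R j * S j = ∑ ℓ, ∑ m, a ℓ m • (x ℓ * x m) := by
      have h1 : ∀ j, R j * S j
          = ∑ ℓ, ∑ m, ((starRingEnd ℂ) (r j ℓ) * (starRingEnd ℂ) (t j m)) • (x ℓ * x m) := by
        intro j
        rw [hR, hS]; simp only [bracket]; rw [Finset.sum_mul]
        refine Finset.sum_congr rfl fun ℓ _ => ?_
        rw [Finset.mul_sum]
        refine Finset.sum_congr rfl fun m _ => ?_
        rw [smul_mul_smul_comm]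
      rw [Finset.sum_congr rfl fun j _ => h1 j]
      rw [Finset.sum_comm]
      refine Finset.sum_congr rfl fun ℓ _ => ?_
      rw [Finset.sum_comm]
      refine Finset.sum_congr rfl fun m _ => ?_
      rw [← Finset.sum_smul, ← hdec ℓ m]
    have hd : quadEvalAlg a b γ x - algebraMap ℂ 𝒜 z = c + ∑ j, R j * S j := by
      rw [hquad, hc, hbr0, quadEvalAlg, map_sub]
      abel
    obtain ⟨hiff, hinv⟩ := LinTrick2.key c R S (quadEvalAlg a b γ x - algebraMap ℂ 𝒜 z) hd
    constructor
    · rw [hLeq]; exact hiff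
    · intro hu
      rw [hLeq] at hu ⊢
      exact hinv (hiff.mp hu)

end
end

section
/- Let N ≥ 1 and ϱ ≥ 1, and let M be a (ϱ+1)N × (ϱ+1)N complex matrix whose columns are indexed by pairs (l,j) with l ∈ {0,…,ϱ} and j ∈ [N]. For j ∈ [N] let C_j denote the (ϱ+1)N × (ϱ+1) submatrix of M formed by the columns {(l,j) : l ∈ {0,…,ϱ}}, and let V_{(j)} ⊆ ℂ^{(ϱ+1)N} be the span of all the other columns of M. Suppose that for each j ∈ [N], U_j is a (ϱ+1)N × (ϱ+1) matrix whose ϱ+1 columns are orthonormal and each orthogonal to V_{(j)}. If σ_min(M) ≤ ε for some ε ≥ 0, then there exists j₀ ∈ [N] such that σ_min(U_{j₀}* C_{j₀}) ≤ ε·√N. -/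
noncomputable section

/-- Euclidean norm of a finitely-indexed complex vector. -/
def evnorm {ι : Type*} [Fintype ι] (v : ι → ℂ) : ℝ :=
  Real.sqrt (∑ i, Complex.normSq (v i))

/-- Smallest singular value of a complex matrix: the infimum of `‖A v‖₂` over unit vectors `v`. -/
def sigmaMin {ι κ : Type*} [Fintype ι] [Fintype κ] (A : Matrix ι κ ℂ) : ℝ :=
  sInf {r : ℝ | ∃ v : κ → ℂ, evnorm v = 1 ∧ r = evnorm (A.mulVec v)}

lemma evnorm_nonneg {ι : Type*} [Fintype ι] (v : ι → ℂ) : 0 ≤ evnorm v := Real.sqrt_nonneg _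

lemma evnorm_sq {ι : Type*} [Fintype ι] (v : ι → ℂ) :
    evnorm v ^ 2 = ∑ i, Complex.normSq (v i) := by
  apply Real.sq_sqrt
  exact Finset.sum_nonneg fun i _ => Complex.normSq_nonneg _

lemma evnorm_eq_norm {ι : Type*} [Fintype ι] (v : ι → ℂ) :
    evnorm v = ‖(WithLp.equiv 2 (ι → ℂ)).symm v‖ := by
  rw [EuclideanSpace.norm_eq]
  unfold evnorm
  congr 1
  refine Finset.sum_congr rfl fun i _ => ?_
  rw [← Complex.sq_norm]
  rfl

lemma cs_ineq {ι : Type*} [Fintype ι] (x y : ι → ℂ) :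
    ‖∑ i, (starRingEnd ℂ) (x i) * y i‖ ≤ evnorm x * evnorm y := by
  rw [evnorm_eq_norm, evnorm_eq_norm]
  have := norm_inner_le_norm (𝕜 := ℂ) ((WithLp.equiv 2 (ι → ℂ)).symm x)
    ((WithLp.equiv 2 (ι → ℂ)).symm y)
  simp only [PiLp.inner_apply, RCLike.inner_apply'] at this
  exact this

lemma ipc_self {ι : Type*} [Fintype ι] (z : ι → ℂ) :
    ∑ i, (starRingEnd ℂ) (z i) * z i = ((evnorm z ^ 2 : ℝ) : ℂ) := by
  rw [evnorm_sq]
  push_cast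
  refine Finset.sum_congr rfl fun i _ => ?_
  rw [mul_comm, Complex.mul_conj]

lemma contract {n k : Type*} [Fintype n] [Fintype k] [DecidableEq k] (U : Matrix n k ℂ)
    (h : ∀ l l', ∑ p, (starRingEnd ℂ) (U p l) * U p l' = if l = l' then (1:ℂ) else 0)
    (x : n → ℂ) : evnorm (U.conjTranspose.mulVec x) ≤ evnorm x := by
  set y := U.conjTranspose.mulVec x with hy
  have hyl : ∀ l, y l = ∑ p, (starRingEnd ℂ) (U p l) * x p := by
    intro l
    simp [hy, Matrix.mulVec, Matrix.conjTranspose_apply, dotProduct]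
  have hUy : ∀ p, U.mulVec y p = ∑ l, U p l * y l := by
    intro p; simp [Matrix.mulVec, dotProduct]
  have expand : ∀ p, (starRingEnd ℂ) (U.mulVec y p) * (U.mulVec y p)
      = ∑ l, ∑ l', ((starRingEnd ℂ) (y l) * y l') * ((starRingEnd ℂ) (U p l) * U p l') := by
    intro p
    rw [hUy, map_sum, Finset.sum_mul]
    refine Finset.sum_congr rfl fun l _ => ?_
    rw [Finset.mul_sum]
    exact Finset.sum_congr rfl fun l' _ => by rw [map_mul]; ring
  have h1 : ∑ p, (starRingEnd ℂ) (U.mulVec y p) * (U.mulVec y p)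
      = ∑ l, (starRingEnd ℂ) (y l) * y l := by
    rw [Finset.sum_congr rfl fun p _ => expand p, Finset.sum_comm]
    refine Finset.sum_congr rfl fun l _ => ?_
    rw [Finset.sum_comm]
    have : ∀ l', ∑ p, ((starRingEnd ℂ) (y l) * y l') * ((starRingEnd ℂ) (U p l) * U p l')
        = ((starRingEnd ℂ) (y l) * y l') * ∑ p, (starRingEnd ℂ) (U p l) * U p l' := by
      intro l'; rw [Finset.mul_sum]
    rw [Finset.sum_congr rfl fun l' _ => this l']
    rw [Finset.sum_eq_single l]
    · rw [h l l, if_pos rfl, mul_one]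
    · intro l' _ hl'; rw [h l l', if_neg (Ne.symm hl'), mul_zero]
    · simp
  have hnUy : evnorm (U.mulVec y) = evnorm y := by
    have hc := (ipc_self (U.mulVec y)).symm.trans (h1.trans (ipc_self y))
    have h2 : evnorm (U.mulVec y) ^ 2 = evnorm y ^ 2 := by exact_mod_cast hc
    nlinarith [evnorm_nonneg (U.mulVec y), evnorm_nonneg y]
  have h3 : ∑ p, (starRingEnd ℂ) (U.mulVec y p) * x p = ∑ l, (starRingEnd ℂ) (y l) * y l := by
    have e2 : ∀ p, (starRingEnd ℂ) (U.mulVec y p) * x p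
        = ∑ l, (starRingEnd ℂ) (y l) * ((starRingEnd ℂ) (U p l) * x p) := by
      intro p
      rw [hUy, map_sum, Finset.sum_mul]
      exact Finset.sum_congr rfl fun l _ => by rw [map_mul]; ring
    rw [Finset.sum_congr rfl fun p _ => e2 p, Finset.sum_comm]
    refine Finset.sum_congr rfl fun l _ => ?_
    rw [← Finset.mul_sum, ← hyl l]
  have hb := cs_ineq (U.mulVec y) x
  rw [h3, ipc_self, hnUy] at hb
  have hns : ‖((evnorm y ^ 2 : ℝ) : ℂ)‖ = evnorm y ^ 2 := by
    rw [Complex.norm_real, Real.norm_of_nonneg (by positivity)]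
  rw [hns] at hb
  rcases eq_or_lt_of_le (evnorm_nonneg y) with h0 | h0
  · rw [← h0]; exact evnorm_nonneg x
  · nlinarith

lemma sigmaMin_le {ι κ : Type*} [Fintype ι] [Fintype κ] (A : Matrix ι κ ℂ)
    {v : κ → ℂ} (hv : evnorm v = 1) : sigmaMin A ≤ evnorm (A.mulVec v) := by
  apply csInf_le
  · exact ⟨0, fun r ⟨w, _, hr⟩ => hr ▸ evnorm_nonneg _⟩
  · exact ⟨v, hv, rfl⟩

lemma evnorm_unit {ι : Type*} [Fintype ι] [DecidableEq ι] (i₀ : ι) :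
    evnorm (fun i => if i = i₀ then (1:ℂ) else 0) = 1 := by
  unfold evnorm
  rw [Finset.sum_eq_single i₀]
  · simp
  · intro b _ hb; simp [hb]
  · simp

lemma exists_lt_of_sigmaMin_lt {ι κ : Type*} [Fintype ι] [Fintype κ] [DecidableEq κ]
    [Nonempty κ] (A : Matrix ι κ ℂ) {c : ℝ} (hc : sigmaMin A < c) :
    ∃ v : κ → ℂ, evnorm v = 1 ∧ evnorm (A.mulVec v) < c := by
  have hne : {r : ℝ | ∃ v : κ → ℂ, evnorm v = 1 ∧ r = evnorm (A.mulVec v)}.Nonempty := by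
    obtain ⟨i₀⟩ := ‹Nonempty κ›
    exact ⟨_, ⟨_, evnorm_unit i₀, rfl⟩⟩
  obtain ⟨r, ⟨v, hv, hr⟩, hrc⟩ := exists_lt_of_csInf_lt hne hc
  exact ⟨v, hv, hr ▸ hrc⟩

lemma evnorm_rsmul {ι : Type*} [Fintype ι] (c : ℝ) (hc : 0 ≤ c) (v : ι → ℂ) :
    evnorm (((c:ℂ)) • v) = c * evnorm v := by
  unfold evnorm
  have : ∀ i, Complex.normSq (((c:ℂ) • v) i) = c^2 * Complex.normSq (v i) := by
    intro i
    simp [Complex.normSq_mul, Complex.normSq_ofReal, sq]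
  rw [Finset.sum_congr rfl fun i _ => this i, ← Finset.mul_sum,
    Real.sqrt_mul (by positivity), Real.sqrt_sq hc]

/-- **Reduction to the invertibility of a small test projection** (Lemma 5.1):
if `σ_min(M) ≤ ε` then some block column, projected onto the orthocomplement of the span of
the other columns, has smallest singular value at most `ε·√N`. -/
theorem smin_reduction_to_test_projection (N ϱ : ℕ) (hN : 1 ≤ N) (hϱ : 1 ≤ ϱ)
    (M : Matrix (Fin (ϱ + 1) × Fin N) (Fin (ϱ + 1) × Fin N) ℂ)
    (U : Fin N → Matrix (Fin (ϱ + 1) × Fin N) (Fin (ϱ + 1)) ℂ)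
    -- the columns of `U j` are orthonormal …
    (horth : ∀ (j : Fin N) (l l' : Fin (ϱ + 1)),
      ∑ p : Fin (ϱ + 1) × Fin N, (starRingEnd ℂ) (U j p l) * U j p l'
        = if l = l' then 1 else 0)
    -- … and orthogonal to every column of `M` other than the columns `(·, j)`
    (hperp : ∀ (j : Fin N) (l : Fin (ϱ + 1)) (l' : Fin (ϱ + 1)) (j' : Fin N), j' ≠ j →
      ∑ p : Fin (ϱ + 1) × Fin N, (starRingEnd ℂ) (U j p l) * M p (l', j') = 0)
    (ε : ℝ) (hε : 0 ≤ ε) (hmin : sigmaMin M ≤ ε) :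
    ∃ j₀ : Fin N,
      sigmaMin ((U j₀).conjTranspose * Matrix.of (fun p l => M p (l, j₀)))
        ≤ ε * Real.sqrt N := by
  haveI : NeZero N := ⟨by omega⟩
  set s : ℝ := Real.sqrt N with hsdef
  have hs : 0 < s := Real.sqrt_pos.2 (by positivity)
  set g : Fin N → ℝ :=
    fun j => sigmaMin ((U j).conjTranspose * Matrix.of (fun p l => M p (l, j))) with hg
  -- key approximation claim
  have key : ∀ η : ℝ, 0 < η → ∃ j₀ : Fin N, g j₀ < ε * s + η := by
    intro η hη
    set δ : ℝ := η / s with hδdef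
    have hδ : 0 < δ := div_pos hη hs
    obtain ⟨v, hv, hMv⟩ := exists_lt_of_sigmaMin_lt M
      (lt_of_le_of_lt hmin (by linarith : ε < ε + δ))
    set t : Fin N → ℝ := fun j => ∑ l, Complex.normSq (v (l, j)) with ht
    have hv2 : ∑ p : Fin (ϱ + 1) × Fin N, Complex.normSq (v p) = 1 := by
      have h2 := evnorm_sq v
      rw [hv, one_pow] at h2
      exact h2.symm
    have hsum : ∑ j, t j = 1 := by
      rw [Fintype.sum_prod_type] at hv2
      rw [← hv2]
      exact Finset.sum_comm
    have hpig : ∃ j₀ : Fin N, (1:ℝ)/N ≤ t j₀ := by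
      by_contra hcon
      push_neg at hcon
      have h1 : ∑ j : Fin N, t j < ∑ _j : Fin N, (1:ℝ)/N :=
        Finset.sum_lt_sum_of_nonempty ⟨⟨0, by omega⟩, Finset.mem_univ _⟩ fun j _ => hcon j
      rw [hsum, Finset.sum_const, Finset.card_univ, Fintype.card_fin, nsmul_eq_mul,
        mul_one_div, div_self (by exact_mod_cast (by omega : N ≠ 0))] at h1
      exact lt_irrefl _ h1
    obtain ⟨j₀, hj₀⟩ := hpig
    set w : Fin (ϱ + 1) → ℂ := fun l => v (l, j₀) with hwdef
    have hweq : evnorm w = Real.sqrt (t j₀) := rfl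
    have htpos : 0 < t j₀ := lt_of_lt_of_le (by positivity) hj₀
    have hwpos : 0 < evnorm w := by rw [hweq]; exact Real.sqrt_pos.2 htpos
    have hsinv : s⁻¹ ≤ evnorm w := by
      rw [hweq, hsdef, ← Real.sqrt_inv]
      apply Real.sqrt_le_sqrt
      rwa [← one_div]
    have hwinv : (evnorm w)⁻¹ ≤ s := by
      have := inv_anti₀ (inv_pos.2 hs) hsinv
      rwa [inv_inv] at this
    set B := (U j₀).conjTranspose * Matrix.of (fun p l => M p (l, j₀)) with hB
    have hkey : B.mulVec w = (U j₀).conjTranspose.mulVec (M.mulVec v) := by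
      funext l
      have lhs : B.mulVec w l
          = ∑ l', (∑ p, (starRingEnd ℂ) (U j₀ p l) * M p (l', j₀)) * v (l', j₀) := by
        simp [hB, Matrix.mulVec, dotProduct, Matrix.mul_apply,
          Matrix.conjTranspose_apply, hwdef]
      have rhs : (U j₀).conjTranspose.mulVec (M.mulVec v) l
          = ∑ q : Fin (ϱ + 1) × Fin N, (∑ p, (starRingEnd ℂ) (U j₀ p l) * M p q) * v q := by
        simp only [Matrix.mulVec, dotProduct, Matrix.conjTranspose_apply,
          Finset.mul_sum, Finset.sum_mul]
        rw [Finset.sum_comm]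
        refine Finset.sum_congr rfl fun q _ => Finset.sum_congr rfl fun p _ => ?_
        rw [show star (U j₀ p l) = (starRingEnd ℂ) (U j₀ p l) from rfl]
        ring
      rw [lhs, rhs, Fintype.sum_prod_type]
      refine Finset.sum_congr rfl fun l' _ => ?_
      symm
      apply Finset.sum_eq_single_of_mem j₀ (Finset.mem_univ _)
      intro j' _ hj'
      rw [hperp j₀ l l' j' hj', zero_mul]
    have hbound : evnorm (B.mulVec w) < ε + δ := by
      calc evnorm (B.mulVec w) = evnorm ((U j₀).conjTranspose.mulVec (M.mulVec v)) := by
            rw [hkey]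
        _ ≤ evnorm (M.mulVec v) := contract (U j₀) (horth j₀) (M.mulVec v)
        _ < ε + δ := hMv
    -- normalize w
    set u : Fin (ϱ + 1) → ℂ := (((evnorm w)⁻¹ : ℝ) : ℂ) • w with hu
    have hu1 : evnorm u = 1 := by
      rw [hu, evnorm_rsmul _ (by positivity), inv_mul_cancel₀ (ne_of_gt hwpos)]
    have hBu : evnorm (B.mulVec u) = (evnorm w)⁻¹ * evnorm (B.mulVec w) := by
      rw [hu, Matrix.mulVec_smul, evnorm_rsmul _ (by positivity)]
    refine ⟨j₀, ?_⟩
    have hlt : (evnorm w)⁻¹ * evnorm (B.mulVec w) < s * (ε + δ) :=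
      mul_lt_mul' hwinv hbound (evnorm_nonneg _) hs
    have hfin : s * (ε + δ) = ε * s + η := by
      rw [hδdef]
      field_simp
    calc g j₀ ≤ evnorm (B.mulVec u) := sigmaMin_le B hu1
      _ = (evnorm w)⁻¹ * evnorm (B.mulVec w) := hBu
      _ < s * (ε + δ) := hlt
      _ = ε * s + η := hfin
  -- conclude from key
  by_contra hcon
  push_neg at hcon
  have hne : (Finset.univ : Finset (Fin N)).Nonempty := ⟨⟨0, by omega⟩, Finset.mem_univ _⟩
  set m : ℝ := Finset.univ.inf' hne g with hm
  have hmlt : ε * s < m := (Finset.lt_inf'_iff hne).2 fun j _ => hcon j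
  obtain ⟨j₀, hj₀⟩ := key (m - ε * s) (by linarith)
  have : m ≤ g j₀ := Finset.inf'_le _ (Finset.mem_univ _)
  linarith

end
end

section
/- Let 1 ≤ m, let A ∈ Mat_m(ℂ) have columns x₁,…,x_m each of Euclidean norm at most 1, and suppose |det A| ≥ κ for some κ > 0. Let v ∈ ℂ^m and δ > 0, and suppose that for every subset J ⊆ [m] with |J| = m−1 one has |det((v, A_J))| < δ, where (v, A_J) denotes the m×m matrix whose first column is v and whose remaining columns are the columns {x_j : j ∈ J} of A. Then ‖v‖₂ < m·δ/κ. -/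
noncomputable section

/-- The `m×m` matrix `(v, A_J)` whose first column is `v` and whose remaining columns are the
columns of `A` indexed by `J` (in increasing order), where `|J| = m − 1`. -/
def firstColMat {m : ℕ} (A : Matrix (Fin m) (Fin m) ℂ) (v : Fin m → ℂ)
    (J : Finset (Fin m)) (hJ : J.card = m - 1) : Matrix (Fin m) (Fin m) ℂ :=
  Matrix.of fun i c =>
    if hc : (c : ℕ) = 0 then v i
    else A i (J.orderEmbOfFin hJ ⟨(c : ℕ) - 1, by have h1 := c.isLt; omega⟩)

lemma evnorm_eq_norm_s18 {m : ℕ} (w : Fin m → ℂ) :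
    evnorm w = ‖(WithLp.equiv 2 (Fin m → ℂ)).symm w‖ := by
  rw [EuclideanSpace.norm_eq]
  unfold evnorm
  congr 1
  apply Finset.sum_congr rfl
  intro i _
  rw [← Complex.sq_norm]
  rfl

/-- **Small coefficients lemma** (Lemma 7.10): if a well-conditioned system of unit columns
almost annihilates `v` in every coordinate hyperplane determinant, then `v` is small. -/
theorem small_vector_of_small_determinants (m : ℕ) (hm : 1 ≤ m)
    (A : Matrix (Fin m) (Fin m) ℂ)
    (hcol : ∀ j : Fin m, evnorm (fun i => A i j) ≤ 1)
    (κ : ℝ) (hκ : 0 < κ) (hdet : κ ≤ ‖A.det‖)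
    (v : Fin m → ℂ) (δ : ℝ) (hδ : 0 < δ)
    (h : ∀ (J : Finset (Fin m)) (hJ : J.card = m - 1),
      ‖Matrix.det (firstColMat A v J hJ)‖ < δ) :
    evnorm v < m * δ / κ := by
  have hdet0 : A.det ≠ 0 := by
    intro h0
    rw [h0] at hdet; simp at hdet; linarith
  -- key: for each j, |det (updateColumn A j v)| < δ
  have key : ∀ j : Fin m, ‖(A.updateCol j v).det‖ < δ := by
    intro j
    set J : Finset (Fin m) := {j}ᶜ with hJdef
    have hJ : J.card = m - 1 := by
      simp [hJdef, Finset.card_compl]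
    -- build permutation
    have hlt : ∀ c : Fin m, (c : ℕ) ≠ 0 → (c : ℕ) - 1 < m - 1 := by
      intro c hc; have := c.isLt; omega
    set g : Fin m → Fin m := fun c =>
      if hc : (c : ℕ) = 0 then j
      else J.orderEmbOfFin hJ ⟨(c : ℕ) - 1, by have := c.isLt; omega⟩ with hg
    have hmem : ∀ (c : Fin m) (hc : (c : ℕ) ≠ 0),
        (J.orderEmbOfFin hJ ⟨(c : ℕ) - 1, by have := c.isLt; omega⟩) ∈ J :=
      fun c hc => Finset.orderEmbOfFin_mem J hJ _
    have hginj : Function.Injective g := by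
      intro a b hab
      by_cases ha : (a : ℕ) = 0 <;> by_cases hb : (b : ℕ) = 0
      · exact Fin.ext (ha.trans hb.symm)
      · exfalso
        rw [hg] at hab; simp only [ha, hb, dif_pos, dif_neg, not_false_iff] at hab
        have := hmem b hb
        rw [← hab] at this
        simp [hJdef] at this
      · exfalso
        rw [hg] at hab; simp only [ha, hb, dif_pos, dif_neg, not_false_iff] at hab
        have := hmem a ha
        rw [hab] at this
        simp [hJdef] at this
      · rw [hg] at hab; simp only [ha, hb, dif_neg, not_false_iff] at hab
        have := (J.orderEmbOfFin hJ).injective hab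
        have h2 : (a : ℕ) - 1 = (b : ℕ) - 1 := congrArg Fin.val this
        exact Fin.ext (by omega)
    have hgbij : Function.Bijective g := (Finite.injective_iff_bijective).mp hginj
    set σ : Equiv.Perm (Fin m) := Equiv.ofBijective g hgbij with hσ
    have hsub : firstColMat A v J hJ = (A.updateCol j v).submatrix id σ := by
      ext i c
      simp only [firstColMat, Matrix.of_apply, Matrix.submatrix_apply, id_eq]
      by_cases hc : (c : ℕ) = 0
      · have : σ c = j := by simp [hσ, Equiv.ofBijective_apply, hg, hc]
        rw [dif_pos hc, this, Matrix.updateCol_apply, if_pos rfl]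
      · have hσc : σ c = J.orderEmbOfFin hJ ⟨(c : ℕ) - 1, by have := c.isLt; omega⟩ := by
          simp [hσ, Equiv.ofBijective_apply, hg, hc]
        have hne : σ c ≠ j := by
          rw [hσc]; have := hmem c hc; intro hcon; rw [hcon] at this
          simp [hJdef] at this
        rw [dif_neg hc, Matrix.updateCol_apply, if_neg hne, hσc]
    have := h J hJ
    rw [hsub, Matrix.det_permute'] at this
    calc ‖(A.updateCol j v).det‖
        = ‖(Equiv.Perm.sign σ : ℂ) * (A.updateCol j v).det‖ := by
          rcases Int.units_eq_one_or (Equiv.Perm.sign σ) with hs | hs <;>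
            simp [hs, map_mul]
      _ < δ := this
  -- coefficients
  set c : Fin m → ℂ := fun j => Matrix.cramer A v j / A.det with hc
  have hcbound : ∀ j, ‖c j‖ < δ / κ := by
    intro j
    rw [hc]
    simp only [norm_div, Matrix.cramer_apply]
    have habs : 0 < ‖A.det‖ := lt_of_lt_of_le hκ hdet
    calc ‖(A.updateCol j v).det‖ / ‖A.det‖
        < δ / ‖A.det‖ := by gcongr; exact key j
      _ ≤ δ / κ := by gcongr
  -- v = sum c j • col j
  have hv : ∀ i, v i = ∑ j, c j * A i j := by
    intro i
    have := congrFun (Matrix.mulVec_cramer A v) i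
    simp only [Matrix.mulVec, dotProduct, Pi.smul_apply, smul_eq_mul] at this
    have hd : A.det * v i = ∑ j, A i j * Matrix.cramer A v j := this.symm
    have hcalc : ∑ j, c j * A i j = v i := by
      calc ∑ j, c j * A i j = A.det⁻¹ * ∑ j, A i j * Matrix.cramer A v j := by
            rw [Finset.mul_sum]
            refine Finset.sum_congr rfl fun j _ => ?_
            rw [hc]; field_simp
        _ = A.det⁻¹ * (A.det * v i) := by rw [hd]
        _ = v i := by field_simp
    exact hcalc.symm
  -- Euclidean norm estimate
  rw [evnorm_eq_norm_s18]
  set E := EuclideanSpace ℂ (Fin m)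
  set f : Fin m → E := fun j => (WithLp.equiv 2 (Fin m → ℂ)).symm (fun i => A i j) with hf
  have hveq : (WithLp.equiv 2 (Fin m → ℂ)).symm v = ∑ j, c j • f j := by
    ext i
    rw [show ((WithLp.equiv 2 (Fin m → ℂ)).symm v) i = v i from rfl, hv i,
      show (∑ j, c j • f j) i = ∑ j, (c j • f j) i from by rw [WithLp.ofLp_sum, Finset.sum_apply]]
    exact Finset.sum_congr rfl fun j _ => rfl
  rw [hveq]
  calc ‖∑ j, c j • f j‖ ≤ ∑ j, ‖c j • f j‖ := norm_sum_le _ _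
    _ < ∑ _j : Fin m, δ / κ := by
        apply Finset.sum_lt_sum_of_nonempty
        · exact Finset.univ_nonempty_iff.mpr (Fin.pos_iff_nonempty.mp (by omega))
        · intro j _
          rw [norm_smul]
          calc ‖c j‖ * ‖f j‖ ≤ ‖c j‖ * 1 := by
                apply mul_le_mul_of_nonneg_left ?_ (norm_nonneg _)
                rw [hf, ← evnorm_eq_norm_s18]; exact hcol j
            _ < δ / κ := by rw [mul_one]; exact hcbound j
    _ = m * δ / κ := by
        rw [Finset.sum_const, Finset.card_univ, Fintype.card_fin, nsmul_eq_mul]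
        ring

end
end
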